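/- If ξ lies in the interior of Ω, then for every i : Fin k the family p ↦ (p i : ℝ) * c p * Real.exp (∑ j, (p j : ℝ) * ξ j) is summable, and the function t ↦ Real.log (g (ξ + t • Pi.single i 1)) has derivative at t = 0 equal to (∑' p, (p i : ℝ) * c p * Real.exp (∑ j, (p j : ℝ) * ξ j)) / g ξ. In other words, the expected number of atoms of type i under the Boltzmann distribution at z = e^ξ equals the i-th partial derivative of log C(e^ξ). -/

import Mathlib

/-- Inside the interior of the domain of convergence, the expected number of
atoms of type `i` under the Boltzmann distribution at `z = e^ξ` equals the
`i`-th partial derivative of `log C(e^ξ)`. -/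
theorem boltzmann_expectation_eq_partial_deriv
    (k : ℕ) (hk : 1 ≤ k)
    (c : (Fin k → ℕ) → ℝ)
    (hc : ∀ p, 0 ≤ c p) (hc0 : c ≠ 0)
    (g : (Fin k → ℝ) → ℝ)
    (hg : ∀ ξ, g ξ = ∑' p : Fin k → ℕ, c p * Real.exp (∑ i, (p i : ℝ) * ξ i))
    (Ω : Set (Fin k → ℝ))
    (hΩ : Ω = {ξ : Fin k → ℝ |
      Summable fun p : Fin k → ℕ => c p * Real.exp (∑ i, (p i : ℝ) * ξ i)})
    (ξ : Fin k → ℝ) (hξ : ξ ∈ interior Ω) :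
    ∀ i : Fin k,
      Summable (fun p : Fin k → ℕ =>
        (p i : ℝ) * c p * Real.exp (∑ j, (p j : ℝ) * ξ j)) ∧
      HasDerivAt (fun t : ℝ => Real.log (g (ξ + t • (Pi.single i 1 : Fin k → ℝ))))
        ((∑' p : Fin k → ℕ,
            (p i : ℝ) * c p * Real.exp (∑ j, (p j : ℝ) * ξ j)) / g ξ) 0 := by
  intro i
  classical
  have hξΩ : ξ ∈ Ω := interior_subset hξ
  have hsum0 : Summable fun p : Fin k → ℕ => c p * Real.exp (∑ j, (p j : ℝ) * ξ j) := by
    rw [hΩ] at hξΩ; exact hξΩ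
  obtain ⟨ε, hε, hball⟩ := Metric.isOpen_iff.1 isOpen_interior ξ hξ
  -- the shifted point ξ + (ε/2) • e_i is still in Ω
  have hsum' : Summable fun p : Fin k → ℕ =>
      c p * Real.exp (∑ j, (p j : ℝ) * (ξ + (ε/2) • (Pi.single i 1 : Fin k → ℝ)) j) := by
    have hmem : ξ + (ε/2) • (Pi.single i 1 : Fin k → ℝ) ∈ interior Ω := by
      apply hball
      rw [Metric.mem_ball, dist_eq_norm]
      have : ξ + (ε/2) • (Pi.single i 1 : Fin k → ℝ) - ξ
          = (ε/2) • (Pi.single i 1 : Fin k → ℝ) := by abel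
      rw [this, norm_smul, Pi.norm_single, norm_one, mul_one, Real.norm_eq_abs,
        abs_of_pos (by linarith)]
      linarith
    have := interior_subset hmem
    rw [hΩ] at this; exact this
  -- the sum along the line
  have hline : ∀ (t : ℝ) (p : Fin k → ℕ),
      ∑ j, (p j : ℝ) * (ξ + t • (Pi.single i 1 : Fin k → ℝ)) j
        = (∑ j, (p j : ℝ) * ξ j) + t * (p i : ℝ) := by
    intro t p
    have : ∀ j, (p j : ℝ) * (ξ + t • (Pi.single i 1 : Fin k → ℝ)) j
        = (p j : ℝ) * ξ j + (if j = i then t * (p i : ℝ) else 0) := by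
      intro j
      by_cases hj : j = i <;> simp [hj, Pi.single_apply, mul_add] <;> ring
    simp only [this, Finset.sum_add_distrib, Finset.sum_ite_eq', Finset.mem_univ, if_true]
  -- the key elementary bound
  have hkey : ∀ m : ℕ, (m : ℝ) * Real.exp ((ε/4) * m) ≤ (4/ε) * Real.exp ((ε/2) * m) := by
    intro m
    have h1 : (ε/4) * (m : ℝ) ≤ Real.exp ((ε/4) * m) := by
      have := Real.add_one_le_exp ((ε/4) * (m : ℝ)); linarith
    have h2 : (m : ℝ) ≤ (4/ε) * Real.exp ((ε/4) * m) := by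
      rw [div_mul_eq_mul_div, le_div_iff₀ hε]
      nlinarith
    calc (m : ℝ) * Real.exp ((ε/4) * m)
        ≤ ((4/ε) * Real.exp ((ε/4) * m)) * Real.exp ((ε/4) * m) :=
          mul_le_mul_of_nonneg_right h2 (Real.exp_pos _).le
      _ = (4/ε) * Real.exp ((ε/2) * m) := by
          rw [mul_assoc, ← Real.exp_add]; ring_nf
  -- summable bound
  set u : (Fin k → ℕ) → ℝ := fun p =>
    (4/ε) * (c p * Real.exp ((∑ j, (p j : ℝ) * ξ j) + (ε/2) * (p i : ℝ))) with hu_def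
  have hu : Summable u := by
    apply Summable.mul_left
    have := hsum'
    simpa only [hline] using this
  -- the pointwise bound for derivatives on Ioo (-(ε/4)) (ε/4)
  have hbound : ∀ (p : Fin k → ℕ) (t : ℝ), t ∈ Set.Ioo (-(ε/4)) (ε/4) →
      ‖(p i : ℝ) * (c p * Real.exp ((∑ j, (p j : ℝ) * ξ j) + t * (p i : ℝ)))‖ ≤ u p := by
    intro p t ht
    rw [Real.norm_eq_abs, abs_of_nonneg (mul_nonneg (Nat.cast_nonneg _)
      (mul_nonneg (hc p) (Real.exp_pos _).le))]
    have h1 : t * (p i : ℝ) ≤ (ε/4) * (p i : ℝ) :=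
      mul_le_mul_of_nonneg_right ht.2.le (Nat.cast_nonneg _)
    calc (p i : ℝ) * (c p * Real.exp ((∑ j, (p j : ℝ) * ξ j) + t * (p i : ℝ)))
        ≤ (p i : ℝ) * (c p * Real.exp ((∑ j, (p j : ℝ) * ξ j) + (ε/4) * (p i : ℝ))) := by
          apply mul_le_mul_of_nonneg_left _ (Nat.cast_nonneg _)
          exact mul_le_mul_of_nonneg_left (Real.exp_le_exp.2 (by linarith)) (hc p)
      _ = c p * Real.exp (∑ j, (p j : ℝ) * ξ j) * ((p i : ℝ) * Real.exp ((ε/4) * (p i : ℝ))) := by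
          rw [Real.exp_add]; ring
      _ ≤ c p * Real.exp (∑ j, (p j : ℝ) * ξ j) * ((4/ε) * Real.exp ((ε/2) * (p i : ℝ))) := by
          apply mul_le_mul_of_nonneg_left (hkey _) (mul_nonneg (hc p) (Real.exp_pos _).le)
      _ = u p := by
          show _ = (4/ε) * (c p * Real.exp ((∑ j, (p j : ℝ) * ξ j) + (ε/2) * (p i : ℝ)))
          rw [Real.exp_add]; ring
  -- summability of the expectation series
  have hsummable : Summable (fun p : Fin k → ℕ =>
      (p i : ℝ) * c p * Real.exp (∑ j, (p j : ℝ) * ξ j)) := by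
    apply Summable.of_nonneg_of_le (fun p => mul_nonneg
      (mul_nonneg (Nat.cast_nonneg _) (hc p)) (Real.exp_pos _).le) (fun p => ?_) hu
    have := hbound p 0 ⟨by linarith, by linarith⟩
    rw [Real.norm_eq_abs, abs_of_nonneg (mul_nonneg (Nat.cast_nonneg _)
      (mul_nonneg (hc p) (Real.exp_pos _).le))] at this
    calc (p i : ℝ) * c p * Real.exp (∑ j, (p j : ℝ) * ξ j)
        = (p i : ℝ) * (c p * Real.exp ((∑ j, (p j : ℝ) * ξ j) + 0 * (p i : ℝ))) := by
          rw [zero_mul, add_zero]; ring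
      _ ≤ u p := this
  refine ⟨hsummable, ?_⟩
  -- derivative of the sum
  have hderiv : HasDerivAt
      (fun t : ℝ => ∑' p : Fin k → ℕ,
        c p * Real.exp ((∑ j, (p j : ℝ) * ξ j) + t * (p i : ℝ)))
      (∑' p : Fin k → ℕ,
        (p i : ℝ) * (c p * Real.exp ((∑ j, (p j : ℝ) * ξ j) + 0 * (p i : ℝ)))) 0 := by
    apply hasDerivAt_tsum_of_isPreconnected hu isOpen_Ioo
      (isPreconnected_Ioo)
      (g' := fun p t => (p i : ℝ) * (c p * Real.exp ((∑ j, (p j : ℝ) * ξ j) + t * (p i : ℝ))))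
      (fun p t _ => ?_) hbound
      (show (0:ℝ) ∈ Set.Ioo (-(ε/4)) (ε/4) from ⟨by linarith, by linarith⟩)
      (by simpa using hsum0)
      (show (0:ℝ) ∈ Set.Ioo (-(ε/4)) (ε/4) from ⟨by linarith, by linarith⟩)
    · have h1 : HasDerivAt (fun t : ℝ => (∑ j, (p j : ℝ) * ξ j) + t * (p i : ℝ)) (p i : ℝ) t := by
        simpa using ((hasDerivAt_id t).mul_const ((p i : ℝ))).const_add (∑ j, (p j : ℝ) * ξ j)
      have := (h1.exp).const_mul (c p)
      convert this using 1
      rfl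
      ring
  -- positivity of g ξ
  have hgpos : 0 < g ξ := by
    obtain ⟨p₀, hp₀⟩ : ∃ p, c p ≠ 0 := by
      by_contra h
      push_neg at h
      exact hc0 (funext h)
    have hp₀' : 0 < c p₀ * Real.exp (∑ j, (p₀ j : ℝ) * ξ j) := by
      exact mul_pos ((hc p₀).lt_of_ne (Ne.symm hp₀)) (Real.exp_pos _)
    rw [hg]
    calc (0:ℝ) < c p₀ * Real.exp (∑ j, (p₀ j : ℝ) * ξ j) := hp₀'
      _ ≤ ∑' p, c p * Real.exp (∑ j, (p j : ℝ) * ξ j) :=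
          Summable.le_tsum hsum0 p₀ (fun p _ => mul_nonneg (hc p) (Real.exp_pos _).le)
  -- conclude
  have hfun : (fun t : ℝ => Real.log (g (ξ + t • (Pi.single i 1 : Fin k → ℝ))))
      = fun t : ℝ => Real.log (∑' p : Fin k → ℕ,
          c p * Real.exp ((∑ j, (p j : ℝ) * ξ j) + t * (p i : ℝ))) := by
    funext t
    rw [hg]
    simp only [hline]
  have hval : (∑' p : Fin k → ℕ,
      c p * Real.exp ((∑ j, (p j : ℝ) * ξ j) + 0 * (p i : ℝ))) = g ξ := by
    rw [hg]
    simp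
  have hlog := hderiv.log (by rw [hval]; exact hgpos.ne')
  rw [hfun]
  have hre : (∑' p : Fin k → ℕ,
      (p i : ℝ) * (c p * Real.exp ((∑ j, (p j : ℝ) * ξ j) + 0 * (p i : ℝ))))
      = ∑' p : Fin k → ℕ, (p i : ℝ) * c p * Real.exp (∑ j, (p j : ℝ) * ξ j) := by
    apply tsum_congr; intro p; rw [zero_mul, add_zero]; ring
  rw [hre, hval] at hlog
  exact hlog
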